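/- Let M ≥ 2 be an integer, let p ∈ [1, ∞) be a real number, let P ∈ 𝒫_M, let b_1, …, b_M > 0 and set b := min_k b_k. Let f_1, …, f_M : ℝ → ℝ be continuous functions and K > 0 be such that |f_k(x)| ≤ K e^{−b_k |x|} for every x ∈ ℝ and every k. Then there exists a constant C > 0, depending only on P, K, M and b, such that for every L > 0 and all real numbers a_1 < a_2 < … < a_M with a_{k+1} − a_k > L for every k, one has (∫_ℝ |P(f_1(x − a_1), …, f_M(x − a_M))|^p dx)^{1/p} ≤ C (2/(p b) + L)^{1/p} e^{−b L}. -/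

import Mathlib

open Real MeasureTheory Set Filter Topology



lemma aux_int_Ioi {k : ℝ} (v : ℝ) (hk : 0 < k) :
    IntegrableOn (fun x : ℝ => Real.exp (-(k * (x - v)))) (Set.Ioi v) := by
  have h : IntegrableOn (fun x : ℝ => Real.exp (k * v) * Real.exp (-k * x)) (Set.Ioi v) :=
    (exp_neg_integrableOn_Ioi v hk).const_mul (Real.exp (k * v))
  refine h.congr_fun (fun x _ => ?_) measurableSet_Ioi
  beta_reduce; rw [← Real.exp_add]; ring_nf

lemma aux_val_Ioi {k : ℝ} (v : ℝ) (hk : 0 < k) :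
    ∫ x in Set.Ioi v, Real.exp (-(k * (x - v))) = 1 / k := by
  have hd : ∀ x ∈ Set.Ici v, HasDerivAt (fun y => -(Real.exp (-(k * (y - v))) / k))
      (Real.exp (-(k * (x - v)))) x := by
    intro x _
    have h1 : HasDerivAt (fun y : ℝ => -(k * (y - v))) (-k) x := by
      have h0 := (((hasDerivAt_id x).sub_const v).const_mul k).neg
      simp only [mul_one] at h0
      exact h0
    have h2 : HasDerivAt (fun y => -(Real.exp (-(k * (y - v))) / k))
        (-(Real.exp (-(k * (x - v))) * -k / k)) x := (h1.exp.div_const k).neg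
    convert h2 using 1
    rw [mul_neg, neg_div, neg_neg, mul_div_assoc, div_self hk.ne', mul_one]
  have ht : Tendsto (fun y => -(Real.exp (-(k * (y - v))) / k)) atTop (𝓝 0) := by
    have hlin : Tendsto (fun y : ℝ => k * (y - v)) atTop atTop := by
      simpa [sub_eq_add_neg] using
        (tendsto_atTop_add_const_right atTop (-v) tendsto_id).const_mul_atTop hk
    have h0 : Tendsto (fun y : ℝ => -(k * (y - v))) atTop atBot :=
      Filter.tendsto_neg_atTop_atBot.comp hlin
    have := ((Real.tendsto_exp_atBot.comp h0).div_const k).neg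
    simpa using this
  have h := integral_Ioi_of_hasDerivAt_of_tendsto' hd (aux_int_Ioi v hk) ht
  rw [h]; simp

lemma aux_int_Iic {k : ℝ} (u : ℝ) (hk : 0 < k) :
    IntegrableOn (fun x : ℝ => Real.exp (-(k * (u - x)))) (Set.Iic u) := by
  have h := ((MeasurePreserving.integrableOn_comp_preimage
      (Measure.measurePreserving_neg (volume : Measure ℝ))
      (Homeomorph.neg ℝ).measurableEmbedding).2 (aux_int_Ioi (-u) hk))
  have hs : (fun x : ℝ => -x) ⁻¹' (Set.Ioi (-u)) = Set.Iio u := by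
    ext x; simp [Set.mem_Ioi, Set.mem_Iio]; 
  rw [hs] at h
  have h2 : IntegrableOn (fun x : ℝ => Real.exp (-(k * (u - x)))) (Set.Iio u) := by
    refine h.congr_fun (fun x _ => ?_) measurableSet_Iio
    simp only [Function.comp]; ring_nf
  exact h2.congr_set_ae Iio_ae_eq_Iic.symm

lemma aux_val_Iic {k : ℝ} (u : ℝ) (hk : 0 < k) :
    ∫ x in Set.Iic u, Real.exp (-(k * (u - x))) = 1 / k := by
  have h := integral_comp_neg_Iic u (fun x => Real.exp (-(k * (x - (-u)))))
  have h2 : (fun x : ℝ => Real.exp (-(k * (-x - (-u))))) = fun x => Real.exp (-(k * (u - x))) := by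
    funext x; ring_nf
  rw [h2] at h
  rw [h, aux_val_Ioi (-u) hk]

lemma aux_int_pair {c u v : ℝ} (hc : 0 < c) (huv : u ≤ v) :
    Integrable (fun x : ℝ => Real.exp (-(c * (|x - u| + |x - v|)))) := by
  have h2c : 0 < 2 * c := by linarith
  have hIic : IntegrableOn (fun x : ℝ => Real.exp (-(c * (|x - u| + |x - v|)))) (Set.Iic u) := by
    have h : IntegrableOn (fun x : ℝ => Real.exp (-(c * (v - u))) * Real.exp (-(2 * c * (u - x)))) (Set.Iic u) :=
      (aux_int_Iic (k := 2*c) u h2c).const_mul (Real.exp (-(c * (v - u))))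
    refine h.congr_fun (fun x hx => ?_) measurableSet_Iic
    simp only [Set.mem_Iic] at hx
    beta_reduce
    rw [← Real.exp_add, abs_of_nonpos (by linarith), abs_of_nonpos (by linarith)]
    try ring_nf
  have hIoc : IntegrableOn (fun x : ℝ => Real.exp (-(c * (|x - u| + |x - v|)))) (Set.Ioc u v) := by
    apply Continuous.integrableOn_Ioc
    continuity
  have hIoi : IntegrableOn (fun x : ℝ => Real.exp (-(c * (|x - u| + |x - v|)))) (Set.Ioi v) := by
    have h : IntegrableOn (fun x : ℝ => Real.exp (-(c * (v - u))) * Real.exp (-(2 * c * (x - v)))) (Set.Ioi v) :=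
      (aux_int_Ioi (k := 2*c) v h2c).const_mul (Real.exp (-(c * (v - u))))
    refine h.congr_fun (fun x hx => ?_) measurableSet_Ioi
    simp only [Set.mem_Ioi] at hx
    beta_reduce
    rw [← Real.exp_add, abs_of_nonneg (by linarith), abs_of_nonneg (by linarith)]
    try ring_nf
  have hIoiu : IntegrableOn (fun x : ℝ => Real.exp (-(c * (|x - u| + |x - v|)))) (Set.Ioi u) :=
    Set.Ioc_union_Ioi_eq_Ioi huv ▸ (hIoc.union hIoi)
  refine integrableOn_univ.mp ?_
  rw [show (Set.univ : Set ℝ) = Set.Iic u ∪ Set.Ioi u from (Set.Iic_union_Ioi).symm]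
  exact hIic.union hIoiu

lemma aux_val_pair {c u v : ℝ} (hc : 0 < c) (huv : u ≤ v) :
    ∫ x : ℝ, Real.exp (-(c * (|x - u| + |x - v|)))
      = Real.exp (-(c * (v - u))) * ((v - u) + 1 / c) := by
  have h2c : 0 < 2 * c := by linarith
  have hint := aux_int_pair hc huv
  have hsplit1 : ∫ x : ℝ, Real.exp (-(c * (|x - u| + |x - v|)))
      = (∫ x in Set.Iic u, Real.exp (-(c * (|x - u| + |x - v|))))
        + ∫ x in Set.Ioi u, Real.exp (-(c * (|x - u| + |x - v|))) := by
    rw [← setIntegral_univ, ← Set.Iic_union_Ioi (a := u),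
      setIntegral_union (Set.Iic_disjoint_Ioi le_rfl) measurableSet_Ioi
        hint.integrableOn hint.integrableOn]
  have hsplit2 : ∫ x in Set.Ioi u, Real.exp (-(c * (|x - u| + |x - v|)))
      = (∫ x in Set.Ioc u v, Real.exp (-(c * (|x - u| + |x - v|))))
        + ∫ x in Set.Ioi v, Real.exp (-(c * (|x - u| + |x - v|))) := by
    rw [← Set.Ioc_union_Ioi_eq_Ioi huv,
      setIntegral_union (Set.Ioc_disjoint_Ioi le_rfl) measurableSet_Ioi
        hint.integrableOn hint.integrableOn]
  have e1 : ∫ x in Set.Iic u, Real.exp (-(c * (|x - u| + |x - v|)))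
      = Real.exp (-(c * (v - u))) * (1 / (2 * c)) := by
    rw [← aux_val_Iic (k := 2*c) u h2c, ← integral_const_mul]
    refine setIntegral_congr_fun measurableSet_Iic (fun x hx => ?_)
    simp only [Set.mem_Iic] at hx
    rw [← Real.exp_add, abs_of_nonpos (by linarith), abs_of_nonpos (by linarith)]
    try ring_nf
  have e2 : ∫ x in Set.Ioc u v, Real.exp (-(c * (|x - u| + |x - v|)))
      = Real.exp (-(c * (v - u))) * (v - u) := by
    have : ∫ x in Set.Ioc u v, Real.exp (-(c * (|x - u| + |x - v|)))
        = ∫ _x in Set.Ioc u v, Real.exp (-(c * (v - u))) := by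
      refine setIntegral_congr_fun measurableSet_Ioc (fun x hx => ?_)
      obtain ⟨h1, h2⟩ := hx
      rw [abs_of_nonneg (by linarith), abs_of_nonpos (by linarith)]
      try ring_nf
    rw [this, setIntegral_const, Real.volume_real_Ioc_of_le (by linarith),
      smul_eq_mul, mul_comm]
  have e3 : ∫ x in Set.Ioi v, Real.exp (-(c * (|x - u| + |x - v|)))
      = Real.exp (-(c * (v - u))) * (1 / (2 * c)) := by
    rw [← aux_val_Ioi (k := 2*c) v h2c, ← integral_const_mul]
    refine setIntegral_congr_fun measurableSet_Ioi (fun x hx => ?_)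
    simp only [Set.mem_Ioi] at hx
    rw [← Real.exp_add, abs_of_nonneg (by linarith), abs_of_nonneg (by linarith)]
    try ring_nf
  rw [hsplit1, hsplit2, e1, e2, e3]
  field_simp
  ring

lemma aux_tradeoff {c L D : ℝ} (hc : 0 < c) (hL : 0 ≤ L) (hLD : L ≤ D) :
    Real.exp (-(c * D)) * (D + 1 / c) ≤ Real.exp (-(c * L)) * (L + 2 / c) := by
  set δ := D - L with hδ
  have hδ0 : 0 ≤ δ := by linarith
  have hED : Real.exp (-(c * D)) = Real.exp (-(c * L)) * Real.exp (-(c * δ)) := by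
    rw [← Real.exp_add, hδ]; ring_nf
  have he1 : Real.exp (-(c * δ)) ≤ 1 := Real.exp_le_one_iff.mpr (by nlinarith)
  have he2 : Real.exp (-(c * δ)) * δ ≤ 1 / c := by
    have h3 : c * δ + 1 ≤ Real.exp (c * δ) := Real.add_one_le_exp _
    have h4 : Real.exp (-(c * δ)) * Real.exp (c * δ) = 1 := by rw [← Real.exp_add]; simp
    have h5 := Real.exp_pos (c * δ)
    have h6 := Real.exp_pos (-(c * δ))
    rw [div_eq_inv_mul, le_inv_mul_iff₀ hc]
    nlinarith
  have hE0 := Real.exp_pos (-(c * L))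
  have h7 : Real.exp (-(c * δ)) * (L + 1 / c) ≤ L + 1 / c := by
    nlinarith [one_div_pos.mpr hc]
  calc Real.exp (-(c * D)) * (D + 1 / c)
      = Real.exp (-(c * L)) * (Real.exp (-(c * δ)) * (L + 1 / c) + Real.exp (-(c * δ)) * δ) := by
        rw [hED, hδ]; ring
    _ ≤ Real.exp (-(c * L)) * ((L + 1 / c) + 1 / c) := by
        apply mul_le_mul_of_nonneg_left _ hE0.le
        linarith
    _ = Real.exp (-(c * L)) * (L + 2 / c) := by try ring_nf

lemma aux_pair_bound {c L u' v' : ℝ} (hc : 0 < c) (hL : 0 < L) (hLd : L ≤ |u' - v'|) :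
    Integrable (fun x : ℝ => Real.exp (-(c * (|x - u'| + |x - v'|)))) ∧
    ∫ x : ℝ, Real.exp (-(c * (|x - u'| + |x - v'|)))
      ≤ Real.exp (-(c * L)) * (L + 2 / c) := by
  have habs : (fun x : ℝ => Real.exp (-(c * (|x - u'| + |x - v'|))))
      = fun x : ℝ => Real.exp (-(c * (|x - min u' v'| + |x - max u' v'|))) := by
    funext x
    rcases le_total u' v' with h | h
    · rw [min_eq_left h, max_eq_right h]
    · rw [min_eq_right h, max_eq_left h, add_comm]
  have hD : L ≤ max u' v' - min u' v' := by
    rcases le_total u' v' with h | h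
    · rw [min_eq_left h, max_eq_right h]; rw [abs_sub_comm, abs_of_nonneg (by linarith)] at hLd
      linarith
    · rw [min_eq_right h, max_eq_left h]; rw [abs_of_nonneg (by linarith)] at hLd; linarith
  have hmm : min u' v' ≤ max u' v' := min_le_max
  constructor
  · rw [habs]; exact aux_int_pair hc hmm
  · rw [habs, aux_val_pair hc hmm]
    exact aux_tradeoff hc hL.le hD

set_option maxHeartbeats 1000000 in
theorem stmt_2 (M : ℕ) (hM : 2 ≤ M) (p : ℝ) (hp : 1 ≤ p)
    (P : MvPolynomial (Fin M) ℝ)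
    (hP : ∀ d ∈ P.support, 2 ≤ d.support.card)
    (b : Fin M → ℝ) (hb : ∀ k, 0 < b k)
    (f : Fin M → ℝ → ℝ) (hf : ∀ k, Continuous (f k))
    (K : ℝ) (hK : 0 < K)
    (hbound : ∀ k x, |f k x| ≤ K * Real.exp (-(b k * |x|))) :
    ∃ C > 0, ∀ L > 0, ∀ a : Fin M → ℝ,
      (∀ (k : ℕ) (hk : k + 1 < M), L < a ⟨k + 1, hk⟩ - a ⟨k, Nat.lt_of_succ_lt hk⟩) →
      (∫ x : ℝ, |MvPolynomial.eval (fun k => f k (x - a k)) P| ^ p) ^ (1 / p)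
        ≤ C * (2 / (p * Finset.univ.inf' ⟨⟨0, by omega⟩, Finset.mem_univ _⟩ b) + L) ^ (1 / p)
          * Real.exp (-(Finset.univ.inf' ⟨⟨0, by omega⟩, Finset.mem_univ _⟩ b * L)) := by
  suffices H : ∀ bm : ℝ, 0 < bm → (∀ k, bm ≤ b k) →
      ∃ C > 0, ∀ L > 0, ∀ a : Fin M → ℝ,
      (∀ (k : ℕ) (hk : k + 1 < M), L < a ⟨k + 1, hk⟩ - a ⟨k, Nat.lt_of_succ_lt hk⟩) →
      (∫ x : ℝ, |MvPolynomial.eval (fun k => f k (x - a k)) P| ^ p) ^ (1 / p)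
        ≤ C * (2 / (p * bm) + L) ^ (1 / p) * Real.exp (-(bm * L)) by
    refine H _ ?_ ?_
    · exact (Finset.lt_inf'_iff _).mpr fun k _ => hb k
    · exact fun k => Finset.inf'_le _ (Finset.mem_univ k)
  intro bm hbm0 hbmle
  have hpp : (0:ℝ) < p := lt_of_lt_of_le one_pos hp
  set Kp : ℝ := max K 1 with hKpdef
  have hKp1 : (1:ℝ) ≤ Kp := le_max_right _ _
  have hKp0 : (0:ℝ) < Kp := lt_of_lt_of_le one_pos hKp1
  set C₁ : ℝ := ∑ d ∈ P.support, |P.coeff d| * Kp ^ (∑ i, d i) with hC₁def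
  have hC₁0 : 0 ≤ C₁ := Finset.sum_nonneg fun d _ =>
    mul_nonneg (abs_nonneg _) (pow_nonneg hKp0.le _)
  refine ⟨C₁ * (M:ℝ)^2 + 1, by positivity, ?_⟩
  intro L hL a hgap
  set c : ℝ := p * bm with hcdef
  have hc : 0 < c := mul_pos hpp hbm0
  -- ordering
  have key : ∀ n : ℕ, ∀ hn : n < M, ∀ i : Fin M, (i : ℕ) < n → L < a ⟨n, hn⟩ - a i := by
    intro n
    induction n with
    | zero => intro _ i hi; omega
    | succ m ih =>
      intro hn i hi
      have h1 : L < a ⟨m+1, hn⟩ - a ⟨m, Nat.lt_of_succ_lt hn⟩ := hgap m hn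
      rcases Nat.lt_or_ge (i : ℕ) m with h | h
      · have h2 := ih (Nat.lt_of_succ_lt hn) i h
        linarith
      · have him : (i:ℕ) = m := by omega
        have hieq : i = ⟨m, Nat.lt_of_succ_lt hn⟩ := Fin.ext him
        rw [hieq]; exact h1
  have hord : ∀ i j : Fin M, i ≠ j → L ≤ |a i - a j| := by
    intro i j hij
    rcases Nat.lt_or_ge (i:ℕ) (j:ℕ) with h | h
    · have hk := key (j:ℕ) j.isLt i h
      simp only [Fin.eta] at hk
      refine le_trans hk.le ?_
      rw [abs_sub_comm]
      exact le_trans (by linarith) (le_abs_self _)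
    · have hlt : (j:ℕ) < (i:ℕ) := by
        have : (j:ℕ) ≠ (i:ℕ) := fun e => hij (Fin.ext e.symm)
        omega
      have hk := key (i:ℕ) i.isLt j hlt
      simp only [Fin.eta] at hk
      exact le_trans hk.le (le_trans (by linarith) (le_abs_self _))
  -- pair set
  set S : Finset (Fin M × Fin M) := Finset.univ.offDiag with hSdef
  have hS : S.Nonempty := by
    refine ⟨(⟨0, by omega⟩, ⟨1, by omega⟩), ?_⟩
    rw [hSdef, Finset.mem_offDiag]
    exact ⟨Finset.mem_univ _, Finset.mem_univ _, by simp [Fin.ext_iff]⟩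
  have hSne : ∀ q ∈ S, q.1 ≠ q.2 := fun q hq => (Finset.mem_offDiag.mp hq).2.2
  -- pointwise bound
  have hpt : ∀ x : ℝ, |MvPolynomial.eval (fun k => f k (x - a k)) P| ^ p
      ≤ C₁ ^ p * ∑ q ∈ S, Real.exp (-(c * (|x - a q.1| + |x - a q.2|))) := by
    intro x
    set m : ℝ := S.inf' hS fun q => |x - a q.1| + |x - a q.2| with hmdef
    have claim1 : ∀ d ∈ P.support,
        (∏ i, |f i (x - a i)| ^ d i) ≤ Kp ^ (∑ i, d i) * Real.exp (-(bm * m)) := by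
      intro d hd
      obtain ⟨i0, hi0, j0, hj0, hij⟩ := Finset.one_lt_card.mp (hP d hd)
      have hfac : ∀ i : Fin M, |f i (x - a i)| ≤ Kp * Real.exp (-(bm * |x - a i|)) := by
        intro i
        refine le_trans (hbound i _) (mul_le_mul (le_max_left _ _) ?_ (Real.exp_pos _).le hKp0.le)
        apply Real.exp_le_exp.mpr
        have := mul_le_mul_of_nonneg_right (hbmle i) (abs_nonneg (x - a i))
        linarith
      have stepA : (∏ i, |f i (x - a i)| ^ d i)
          ≤ ∏ i, (Kp * Real.exp (-(bm * |x - a i|))) ^ d i :=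
        Finset.prod_le_prod (fun i _ => pow_nonneg (abs_nonneg _) _)
          (fun i _ => pow_le_pow_left₀ (abs_nonneg _) (hfac i) _)
      have stepB : (∏ i, (Kp * Real.exp (-(bm * |x - a i|))) ^ d i)
          = Kp ^ (∑ i, d i) * Real.exp (∑ i, (d i : ℝ) * (-(bm * |x - a i|))) := by
        simp only [mul_pow]
        rw [Finset.prod_mul_distrib, Finset.prod_pow_eq_pow_sum, Real.exp_sum]
        congr 1
        refine Finset.prod_congr rfl fun i _ => ?_
        rw [← Real.exp_nat_mul]
      have hd1 : 1 ≤ d i0 := Nat.one_le_iff_ne_zero.mpr (Finsupp.mem_support_iff.mp hi0)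
      have hd2 : 1 ≤ d j0 := Nat.one_le_iff_ne_zero.mpr (Finsupp.mem_support_iff.mp hj0)
      have hm_le : m ≤ |x - a i0| + |x - a j0| := by
        refine Finset.inf'_le (b := (i0, j0)) (fun q => |x - a q.1| + |x - a q.2|) ?_
        rw [hSdef, Finset.mem_offDiag]
        exact ⟨Finset.mem_univ _, Finset.mem_univ _, hij⟩
      have hsum : m ≤ ∑ i, (d i : ℝ) * |x - a i| := by
        have h2 : ∑ i ∈ ({i0, j0} : Finset (Fin M)), (d i : ℝ) * |x - a i|
            ≤ ∑ i, (d i : ℝ) * |x - a i| :=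
          Finset.sum_le_sum_of_subset_of_nonneg (Finset.subset_univ _)
            (fun i _ _ => mul_nonneg (Nat.cast_nonneg _) (abs_nonneg _))
        rw [Finset.sum_pair hij] at h2
        have ha1 : |x - a i0| ≤ (d i0 : ℝ) * |x - a i0| :=
          le_mul_of_one_le_left (abs_nonneg _) (by exact_mod_cast hd1)
        have ha2 : |x - a j0| ≤ (d j0 : ℝ) * |x - a j0| :=
          le_mul_of_one_le_left (abs_nonneg _) (by exact_mod_cast hd2)
        linarith
      have stepC : Real.exp (∑ i, (d i : ℝ) * (-(bm * |x - a i|)))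
          ≤ Real.exp (-(bm * m)) := by
        apply Real.exp_le_exp.mpr
        have he : (∑ i, (d i : ℝ) * (-(bm * |x - a i|)))
            = -(bm * ∑ i, (d i : ℝ) * |x - a i|) := by
          rw [Finset.mul_sum, ← Finset.sum_neg_distrib]
          exact Finset.sum_congr rfl fun i _ => by ring
        rw [he]
        have := mul_le_mul_of_nonneg_left hsum hbm0.le
        linarith
      calc (∏ i, |f i (x - a i)| ^ d i)
          ≤ ∏ i, (Kp * Real.exp (-(bm * |x - a i|))) ^ d i := stepA
        _ = Kp ^ (∑ i, d i) * Real.exp (∑ i, (d i : ℝ) * (-(bm * |x - a i|))) := stepB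
        _ ≤ Kp ^ (∑ i, d i) * Real.exp (-(bm * m)) := by
            exact mul_le_mul_of_nonneg_left stepC (pow_nonneg hKp0.le _)
    have claim2 : |MvPolynomial.eval (fun k => f k (x - a k)) P| ≤ C₁ * Real.exp (-(bm * m)) := by
      rw [MvPolynomial.eval_eq']
      refine le_trans (Finset.abs_sum_le_sum_abs _ _) ?_
      rw [hC₁def, Finset.sum_mul]
      refine Finset.sum_le_sum fun d hd => ?_
      rw [abs_mul, Finset.abs_prod, mul_assoc]
      refine mul_le_mul_of_nonneg_left ?_ (abs_nonneg _)
      simp only [abs_pow]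
      exact claim1 d hd
    have claim3 : |MvPolynomial.eval (fun k => f k (x - a k)) P| ^ p
        ≤ C₁ ^ p * Real.exp (-(c * m)) := by
      have h := Real.rpow_le_rpow (abs_nonneg _) claim2 hpp.le
      rw [Real.mul_rpow hC₁0 (Real.exp_pos _).le, ← Real.exp_mul] at h
      have he : -(bm * m) * p = -(c * m) := by rw [hcdef]; ring
      rwa [he] at h
    have claim4 : Real.exp (-(c * m))
        ≤ ∑ q ∈ S, Real.exp (-(c * (|x - a q.1| + |x - a q.2|))) := by
      obtain ⟨q0, hq0mem, hq0⟩ := Finset.exists_mem_eq_inf' hS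
        (fun q => |x - a q.1| + |x - a q.2|)
      have heq : Real.exp (-(c * m)) = Real.exp (-(c * (|x - a q0.1| + |x - a q0.2|))) := by
        rw [hmdef, hq0]
      rw [heq]
      have := Finset.single_le_sum
        (f := fun q : Fin M × Fin M => Real.exp (-(c * (|x - a q.1| + |x - a q.2|))))
        (fun q _ => (Real.exp_pos _).le) hq0mem
      exact this
    refine le_trans claim3 (mul_le_mul_of_nonneg_left claim4 (Real.rpow_nonneg hC₁0 p))
  -- integrate
  have hpair : ∀ q ∈ S,
      Integrable (fun x : ℝ => Real.exp (-(c * (|x - a q.1| + |x - a q.2|)))) ∧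
      ∫ x : ℝ, Real.exp (-(c * (|x - a q.1| + |x - a q.2|)))
        ≤ Real.exp (-(c * L)) * (L + 2 / c) :=
    fun q hq => aux_pair_bound hc hL (hord _ _ (hSne q hq))
  have hsumint : Integrable (fun x : ℝ =>
      ∑ q ∈ S, Real.exp (-(c * (|x - a q.1| + |x - a q.2|)))) :=
    integrable_finset_sum S fun q hq => (hpair q hq).1
  have hcont : Continuous fun x : ℝ => MvPolynomial.eval (fun k => f k (x - a k)) P := by
    simp only [MvPolynomial.eval_eq']
    refine continuous_finset_sum _ fun d _ => Continuous.mul continuous_const ?_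
    exact continuous_finset_prod _ fun i _ =>
      (((hf i).comp (continuous_id.sub continuous_const)).pow _)
  have hlhsmeas : AEStronglyMeasurable
      (fun x : ℝ => |MvPolynomial.eval (fun k => f k (x - a k)) P| ^ p) volume :=
    (hcont.abs.rpow_const fun x => Or.inr hpp.le).aestronglyMeasurable
  have hlhsint : Integrable
      (fun x : ℝ => |MvPolynomial.eval (fun k => f k (x - a k)) P| ^ p) := by
    refine Integrable.mono' (hsumint.const_mul (C₁ ^ p)) hlhsmeas (ae_of_all _ fun x => ?_)
    rw [Real.norm_eq_abs, abs_of_nonneg (Real.rpow_nonneg (abs_nonneg _) _)]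
    exact hpt x
  have hIneq : ∫ x : ℝ, |MvPolynomial.eval (fun k => f k (x - a k)) P| ^ p
      ≤ C₁ ^ p * ((M:ℝ)^2 * (Real.exp (-(c * L)) * (L + 2 / c))) := by
    refine le_trans (integral_mono hlhsint (hsumint.const_mul _) hpt) ?_
    rw [integral_const_mul, integral_finset_sum S fun q hq => (hpair q hq).1]
    refine mul_le_mul_of_nonneg_left ?_ (Real.rpow_nonneg hC₁0 p)
    have hA0 : 0 ≤ Real.exp (-(c * L)) * (L + 2 / c) := by positivity
    calc (∑ q ∈ S, ∫ x : ℝ, Real.exp (-(c * (|x - a q.1| + |x - a q.2|))))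
        ≤ S.card • (Real.exp (-(c * L)) * (L + 2 / c)) :=
          Finset.sum_le_card_nsmul S _ _ fun q hq => (hpair q hq).2
      _ = (S.card : ℝ) * (Real.exp (-(c * L)) * (L + 2 / c)) := by rw [nsmul_eq_mul]
      _ ≤ (M:ℝ)^2 * (Real.exp (-(c * L)) * (L + 2 / c)) := by
          refine mul_le_mul_of_nonneg_right ?_ hA0
          have hcard : S.card ≤ M * M := by
            have := Finset.card_le_univ S
            simpa using this
          calc (S.card : ℝ) ≤ (M : ℝ) * M := by exact_mod_cast hcard
            _ = (M:ℝ)^2 := by ring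
  -- final rpow manipulations
  have hLHS0 : 0 ≤ ∫ x : ℝ, |MvPolynomial.eval (fun k => f k (x - a k)) P| ^ p :=
    integral_nonneg fun x => Real.rpow_nonneg (abs_nonneg _) _
  have hstep := Real.rpow_le_rpow hLHS0 hIneq (by positivity : (0:ℝ) ≤ 1 / p)
  refine le_trans hstep ?_
  have hA0 : (0:ℝ) ≤ Real.exp (-(c * L)) * (L + 2 / c) := by positivity
  have hM20 : (0:ℝ) ≤ (M:ℝ)^2 := by positivity
  have hbase : (0:ℝ) ≤ 2 / (p * bm) + L := add_nonneg (by positivity) hL.le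
  have hA20 : (0:ℝ) ≤ (2 / (p * bm) + L) ^ (1/p) := Real.rpow_nonneg hbase _
  have hE0 : (0:ℝ) ≤ Real.exp (-(bm * L)) := (Real.exp_pos _).le
  have h1 : (C₁ ^ p) ^ (1/p) = C₁ := by
    rw [← Real.rpow_mul hC₁0, mul_one_div, div_self hpp.ne', Real.rpow_one]
  have hE : (Real.exp (-(c * L))) ^ (1/p) = Real.exp (-(bm * L)) := by
    rw [← Real.exp_mul]
    congr 1
    rw [hcdef]
    field_simp
  have hT : L + 2 / c = 2 / (p * bm) + L := by rw [hcdef]; ring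
  have h1M : (1:ℝ) ≤ (M:ℝ)^2 := by
    have : (1:ℝ) ≤ (M:ℝ) := by exact_mod_cast le_trans (by norm_num) hM
    nlinarith
  have hM2 : ((M:ℝ)^2) ^ (1/p) ≤ (M:ℝ)^2 := by
    calc ((M:ℝ)^2) ^ (1/p) ≤ ((M:ℝ)^2) ^ (1:ℝ) :=
          Real.rpow_le_rpow_of_exponent_le h1M ((div_le_one hpp).mpr hp)
      _ = (M:ℝ)^2 := Real.rpow_one _
  have hexpand : (C₁ ^ p * ((M:ℝ)^2 * (Real.exp (-(c * L)) * (L + 2 / c)))) ^ (1/p)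
      = C₁ * (((M:ℝ)^2) ^ (1/p) * (Real.exp (-(bm * L)) * (2 / (p * bm) + L) ^ (1/p))) := by
    rw [Real.mul_rpow (Real.rpow_nonneg hC₁0 p) (by positivity),
      Real.mul_rpow (by positivity) (by positivity),
      Real.mul_rpow (Real.exp_pos _).le (by rw [hT]; exact hbase), h1, hE, hT]
  rw [hexpand]
  have hEA : (0:ℝ) ≤ Real.exp (-(bm * L)) * (2 / (p * bm) + L) ^ (1/p) :=
    mul_nonneg hE0 hA20
  calc C₁ * (((M:ℝ)^2) ^ (1/p) * (Real.exp (-(bm * L)) * (2 / (p * bm) + L) ^ (1/p)))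
      ≤ C₁ * ((M:ℝ)^2 * (Real.exp (-(bm * L)) * (2 / (p * bm) + L) ^ (1/p))) :=
        mul_le_mul_of_nonneg_left (mul_le_mul_of_nonneg_right hM2 hEA) hC₁0
    _ = (C₁ * (M:ℝ)^2) * ((2 / (p * bm) + L) ^ (1/p) * Real.exp (-(bm * L))) := by ring
    _ ≤ (C₁ * (M:ℝ)^2 + 1) * ((2 / (p * bm) + L) ^ (1/p) * Real.exp (-(bm * L))) := by
        refine mul_le_mul_of_nonneg_right (by linarith) (mul_nonneg hA20 hE0)
    _ = (C₁ * (M:ℝ)^2 + 1) * (2 / (p * bm) + L) ^ (1/p) * Real.exp (-(bm * L)) := by ring
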